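/- arXiv:2301.12834 — 5 statements merged into one kernel-verified Lean document; each statement's English description precedes it below -/
import Mathlib

section
/- Let d ≥ 1 and r ∈ (1,∞) with r' = r/(r−1), and let G : ℝ^{d×d} × ℝ^{d×d} → ℝ^{d×d} satisfy conditions (G1)–(G4) with exponent r. Then there exist constants C̃₁, C̃₂ > 0, independent of ε, such that for every ε ∈ (0,1) and every (S,D) ∈ ℝ^{d×d} × ℝ^{d×d} with Gε(S,D) = 0 one has S : D ≥ C̃₁(|S|^{min{2,r'}} + |D|^{min{2,r}}) − C̃₂. -/
noncomputable section
open MeasureTheory Filter Topology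

/-- `ℝ^{d×d}` with the Frobenius inner product, realized as a Euclidean space. -/
abbrev Mat (d : ℕ) : Type := EuclideanSpace ℝ (Fin d × Fin d)

/-- The Frobenius inner product `A : B`. -/
def frob {d : ℕ} (A B : Mat d) : ℝ := inner ℝ A B

/-- The partial derivative `∂_S G(S,D)` as a continuous linear map. -/
def partialS {d : ℕ} (G : Mat d × Mat d → Mat d) (p : Mat d × Mat d) :
    Mat d →L[ℝ] Mat d :=
  (fderiv ℝ G p).comp (ContinuousLinearMap.inl ℝ (Mat d) (Mat d))

/-- The partial derivative `∂_D G(S,D)` as a continuous linear map. -/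
def partialD {d : ℕ} (G : Mat d × Mat d → Mat d) (p : Mat d × Mat d) :
    Mat d →L[ℝ] Mat d :=
  (fderiv ℝ G p).comp (ContinuousLinearMap.inr ℝ (Mat d) (Mat d))

/-- (G1): `G` is Lipschitz continuous with `G(0,0) = 0`. -/
def CondG1 {d : ℕ} (G : Mat d × Mat d → Mat d) : Prop :=
  (∃ K : NNReal, LipschitzWith K G) ∧ G (0, 0) = 0

/-- (G2): a.e. differentiability together with the sign conditions on the partial
derivatives. -/
def CondG2 {d : ℕ} (G : Mat d × Mat d → Mat d) : Prop :=
  ∀ᵐ p ∂(volume : Measure (Mat d × Mat d)),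
    DifferentiableAt ℝ G p ∧
    (∀ X : Mat d, 0 ≤ frob (partialS G p X) X) ∧
    (∀ X : Mat d, frob (partialD G p X) X ≤ 0) ∧
    (∀ X : Mat d, X ≠ 0 → 0 < frob (partialS G p X - partialD G p X) X) ∧
    (∀ X : Mat d,
      frob (partialD G p (ContinuousLinearMap.adjoint (partialS G p) X)) X ≤ 0)

/-- (G3): either coercivity in `S` or anti-coercivity in `D` at infinity. -/
def CondG3 {d : ℕ} (G : Mat d × Mat d → Mat d) : Prop :=
  (∀ D : Mat d, 0 < liminf (fun S : Mat d => frob (G (S, D)) S) (comap norm atTop)) ∨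
  (∀ S : Mat d, limsup (fun D : Mat d => frob (G (S, D)) D) (comap norm atTop) < 0)

/-- (G4) with exponent `r`: `(r, r')`-coercivity on the null points of `G`. -/
def CondG4 {d : ℕ} (r : ℝ) (G : Mat d × Mat d → Mat d) : Prop :=
  ∃ C₁ C₂ : ℝ, 0 < C₁ ∧ 0 < C₂ ∧ ∀ S D : Mat d, G (S, D) = 0 →
    C₁ * (‖S‖ ^ (r / (r - 1)) + ‖D‖ ^ r) - C₂ ≤ frob S D

/-- The `ε`-approximation `Gε(S,D) := G(S − εD, D − εS)`. -/
def Geps {d : ℕ} (G : Mat d × Mat d → Mat d) (ε : ℝ) : Mat d × Mat d → Mat d :=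
  fun p => G (p.1 - ε • p.2, p.2 - ε • p.1)

private lemma rpow_sub_one_le {a p q : ℝ} (ha : 0 ≤ a) (hp : 0 ≤ p) (hpq : p ≤ q) :
    a ^ p - 1 ≤ a ^ q := by
  rcases le_total a 1 with h | h
  · have h1 : a ^ p ≤ 1 := Real.rpow_le_one ha h hp
    have h2 : 0 ≤ a ^ q := Real.rpow_nonneg ha q
    linarith
  · have h1 : a ^ p ≤ a ^ q := Real.rpow_le_rpow_of_exponent_le h hpq
    linarith

private lemma key_ineq {C₁ q ε x y w : ℝ} (hC₁ : 0 < C₁) (hq : 1 ≤ q) (hε : 0 < ε)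
    (hε1 : ε ≤ 1) (hx : 0 ≤ x) (hy : 0 ≤ y) (hw : 0 ≤ w) (hxw : x - ε * y ≤ w) :
    min (1/4) (C₁ * (1/2 : ℝ) ^ q) * x ^ (min 2 q) - (C₁ + 1) ≤ C₁ * w ^ q + ε * y ^ 2 := by
  set c := min (1/4) (C₁ * (1/2 : ℝ) ^ q) with hc
  have hq0 : (0:ℝ) ≤ q := by linarith
  have hm0 : (0:ℝ) ≤ min 2 q := le_min (by norm_num) hq0
  have hmq : min 2 q ≤ q := min_le_right _ _
  have hm2 : min 2 q ≤ 2 := min_le_left _ _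
  have h12 : (0:ℝ) < (1/2 : ℝ) ^ q := by positivity
  have hc4 : c ≤ 1/4 := min_le_left _ _
  have hcC : c ≤ C₁ * (1/2 : ℝ) ^ q := min_le_right _ _
  have hxm : 0 ≤ x ^ (min 2 q) := Real.rpow_nonneg hx _
  have hwq : 0 ≤ w ^ q := Real.rpow_nonneg hw _
  have haux : x ^ (min 2 q) - 1 ≤ x ^ q := rpow_sub_one_le hx hm0 hmq
  have haux2 : x ^ (min 2 q) - 1 ≤ x ^ 2 := by
    have := rpow_sub_one_le hx hm0 hm2
    rwa [Real.rpow_two] at this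
  have h12le : (1/2 : ℝ) ^ q ≤ 1 := Real.rpow_le_one (by norm_num) (by norm_num) hq0
  rcases le_total (ε * y) (x / 2) with h | h
  · -- ε y ≤ x/2 : use the w-term
    have hw2 : x / 2 ≤ w := by linarith
    have hmono : (x / 2) ^ q ≤ w ^ q := Real.rpow_le_rpow (by positivity) hw2 hq0
    have hsplit : (x / 2) ^ q = x ^ q * (1/2 : ℝ) ^ q := by
      rw [div_eq_mul_one_div, Real.mul_rpow hx (by norm_num)]
    rw [hsplit] at hmono
    have f1 : c * x ^ (min 2 q) ≤ C₁ * (1/2 : ℝ) ^ q * x ^ (min 2 q) :=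
      mul_le_mul_of_nonneg_right hcC hxm
    have f2 : C₁ * (1/2 : ℝ) ^ q * x ^ (min 2 q) ≤ C₁ * (1/2 : ℝ) ^ q * (x ^ q + 1) :=
      mul_le_mul_of_nonneg_left (by linarith) (by positivity)
    have f3 : C₁ * (x ^ q * (1/2 : ℝ) ^ q) ≤ C₁ * w ^ q :=
      mul_le_mul_of_nonneg_left hmono hC₁.le
    have f4 : C₁ * (1/2 : ℝ) ^ q ≤ C₁ := by nlinarith
    have f5 : 0 ≤ ε * y ^ 2 := by positivity
    nlinarith
  · -- x/2 ≤ ε y : use the ε y² term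
    have hy2 : x / 2 ≤ y := by nlinarith
    have h4 : x ^ 2 / 4 ≤ ε * y ^ 2 := by nlinarith
    have f1 : c * x ^ (min 2 q) ≤ (1/4) * x ^ (min 2 q) := mul_le_mul_of_nonneg_right hc4 hxm
    nlinarith

/-- uniform (`ε`-independent) coercivity of the null points of the
`ε`-approximations `Gε`. -/
theorem Geps_uniform_coercivity {d : ℕ} (hd : 1 ≤ d) (r : ℝ) (hr : 1 < r)
    (G : Mat d × Mat d → Mat d)
    (hG1 : CondG1 G) (hG2 : CondG2 G) (hG3 : CondG3 G) (hG4 : CondG4 r G) :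
    ∃ C₁ C₂ : ℝ, 0 < C₁ ∧ 0 < C₂ ∧
      ∀ ε ∈ Set.Ioo (0 : ℝ) 1, ∀ S D : Mat d, Geps G ε (S, D) = 0 →
        C₁ * (‖S‖ ^ min 2 (r / (r - 1)) + ‖D‖ ^ min 2 r) - C₂ ≤ frob S D := by
  obtain ⟨C₁, C₂, hC₁, hC₂, hG4'⟩ := hG4
  have hr1 : 0 < r - 1 := by linarith
  have hr'1 : 1 ≤ r / (r - 1) := by
    rw [le_div_iff₀ hr1]; linarith
  set r' : ℝ := r / (r - 1) with hr'def
  set cS : ℝ := min (1/4) (C₁ * (1/2 : ℝ) ^ r') with hcS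
  set cD : ℝ := min (1/4) (C₁ * (1/2 : ℝ) ^ r) with hcD
  have hcS0 : 0 < cS := lt_min (by norm_num) (by positivity)
  have hcD0 : 0 < cD := lt_min (by norm_num) (by positivity)
  set c : ℝ := min cS cD with hc
  have hc0 : 0 < c := lt_min hcS0 hcD0
  set K : ℝ := 2 * C₁ + 2 + C₂ with hK
  have hK0 : 0 < K := by positivity
  refine ⟨c / 2, K, by positivity, hK0, ?_⟩
  rintro ε ⟨hε0, hε1⟩ S D h0
  have h0' : G (S - ε • D, D - ε • S) = 0 := h0
  have hG4ap := hG4' (S - ε • D) (D - ε • S) h0'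
  -- inner product identity
  have hid : frob (S - ε • D) (D - ε • S)
      = (1 + ε ^ 2) * frob S D - ε * (‖S‖ ^ 2 + ‖D‖ ^ 2) := by
    simp only [frob, inner_sub_left, inner_sub_right, real_inner_smul_left,
      real_inner_smul_right, real_inner_self_eq_norm_sq, real_inner_comm D S]
    ring
  -- norm bounds
  have hnS : ‖S‖ - ε * ‖D‖ ≤ ‖S - ε • D‖ := by
    have := norm_sub_norm_le S (ε • D)
    rw [norm_smul, Real.norm_eq_abs, abs_of_pos hε0] at this
    linarith
  have hnD : ‖D‖ - ε * ‖S‖ ≤ ‖D - ε • S‖ := by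
    have := norm_sub_norm_le D (ε • S)
    rw [norm_smul, Real.norm_eq_abs, abs_of_pos hε0] at this
    linarith
  have keyS : cS * ‖S‖ ^ (min 2 r') - (C₁ + 1)
      ≤ C₁ * ‖S - ε • D‖ ^ r' + ε * ‖D‖ ^ 2 :=
    key_ineq hC₁ hr'1 hε0 hε1.le (norm_nonneg S) (norm_nonneg D) (norm_nonneg _) hnS
  have keyD : cD * ‖D‖ ^ (min 2 r) - (C₁ + 1)
      ≤ C₁ * ‖D - ε • S‖ ^ r + ε * ‖S‖ ^ 2 :=
    key_ineq hC₁ hr.le hε0 hε1.le (norm_nonneg D) (norm_nonneg S) (norm_nonneg _) hnD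
  have hA : 0 ≤ ‖S‖ ^ (min 2 r') := Real.rpow_nonneg (norm_nonneg S) _
  have hB : 0 ≤ ‖D‖ ^ (min 2 r) := Real.rpow_nonneg (norm_nonneg D) _
  have hcA : c * ‖S‖ ^ (min 2 r') ≤ cS * ‖S‖ ^ (min 2 r') :=
    mul_le_mul_of_nonneg_right (min_le_left _ _) hA
  have hcB : c * ‖D‖ ^ (min 2 r) ≤ cD * ‖D‖ ^ (min 2 r) :=
    mul_le_mul_of_nonneg_right (min_le_right _ _) hB
  rw [hid] at hG4ap
  -- X ≤ (1 + ε²) * frob S D, where X := c*(A + B) - K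
  have hX : c * (‖S‖ ^ (min 2 r') + ‖D‖ ^ (min 2 r)) - K ≤ (1 + ε ^ 2) * frob S D := by
    linarith [keyS, keyD, hcA, hcB, hG4ap]
  have hXK : -K ≤ c * (‖S‖ ^ (min 2 r') + ‖D‖ ^ (min 2 r)) - K := by
    have := mul_nonneg hc0.le (add_nonneg hA hB)
    linarith
  set X : ℝ := c * (‖S‖ ^ (min 2 r') + ‖D‖ ^ (min 2 r)) - K with hXdef
  have hε2 : ε ^ 2 ≤ 1 := by nlinarith
  have hgoal : X / 2 - K / 2 ≤ frob S D := by
    rcases le_or_gt 0 (frob S D) with hF | hF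
    · have h1 : ε ^ 2 * frob S D ≤ 1 * frob S D := mul_le_mul_of_nonneg_right hε2 hF
      linarith
    · have h1 : ε ^ 2 * frob S D ≤ 0 := mul_nonpos_of_nonneg_of_nonpos (sq_nonneg ε) hF.le
      linarith
  calc c / 2 * (‖S‖ ^ min 2 r' + ‖D‖ ^ min 2 r) - K = X / 2 - K / 2 := by
        rw [hXdef]; ring
    _ ≤ frob S D := hgoal
end
end

section
/- Let d ≥ 1 and r ∈ (1,∞), and let G : ℝ^{d×d} × ℝ^{d×d} → ℝ^{d×d} satisfy conditions (G1)–(G4) with exponent r. Then for every ε ∈ (0,1) the ε-approximation Gε satisfies (G4) with exponent 2, i.e. there exist constants c₁(ε), c₂(ε) > 0 such that for every (S,D) ∈ ℝ^{d×d} × ℝ^{d×d} with Gε(S,D) = 0 one has S : D ≥ c₁(ε)(|S|² + |D|²) − c₂(ε). -/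
noncomputable section
open MeasureTheory Filter Topology

/-- each `ε`-approximation `Gε` satisfies the coercivity condition (G4)
with exponent `2`. -/
theorem Geps_condG4_two {d : ℕ} (hd : 1 ≤ d) (r : ℝ) (hr : 1 < r)
    (G : Mat d × Mat d → Mat d)
    (hG1 : CondG1 G) (hG2 : CondG2 G) (hG3 : CondG3 G) (hG4 : CondG4 r G)
    (ε : ℝ) (hε : ε ∈ Set.Ioo (0 : ℝ) 1) :
    ∃ c₁ c₂ : ℝ, 0 < c₁ ∧ 0 < c₂ ∧
      ∀ S D : Mat d, Geps G ε (S, D) = 0 →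
        c₁ * (‖S‖ ^ 2 + ‖D‖ ^ 2) - c₂ ≤ frob S D := by
  obtain ⟨C₁, C₂, hC₁, hC₂, hG4'⟩ := hG4
  obtain ⟨hε0, hε1⟩ := hε
  have hpos : (0:ℝ) < 1 + ε ^ 2 := by positivity
  refine ⟨ε / (1 + ε ^ 2), C₂ / (1 + ε ^ 2), by positivity, by positivity, ?_⟩
  intro S D h0
  have key := hG4' (S - ε • D) (D - ε • S) h0
  have hn1 := Real.rpow_nonneg (norm_nonneg (S - ε • D)) (r / (r - 1))
  have hn2 := Real.rpow_nonneg (norm_nonneg (D - ε • S)) r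
  have h2 : -C₂ ≤ frob (S - ε • D) (D - ε • S) := by nlinarith
  have h3 : frob (S - ε • D) (D - ε • S)
      = (1 + ε ^ 2) * frob S D - ε * (‖S‖ ^ 2 + ‖D‖ ^ 2) := by
    simp only [frob, inner_sub_left, inner_sub_right, real_inner_smul_left,
      real_inner_smul_right, real_inner_self_eq_norm_sq]
    rw [real_inner_comm D S]; ring
  have heq : ε / (1 + ε ^ 2) * (‖S‖ ^ 2 + ‖D‖ ^ 2) - C₂ / (1 + ε ^ 2)
      = (ε * (‖S‖ ^ 2 + ‖D‖ ^ 2) - C₂) / (1 + ε ^ 2) := by ring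
  rw [heq, div_le_iff₀ hpos]
  nlinarith
end
end

section
/- Let d ≥ 1 and let G : ℝ^{d×d} × ℝ^{d×d} → ℝ^{d×d} satisfy conditions (G1) and (G2). Then for every ε ∈ (0,1) the ε-approximation Gε(S,D) := G(S − εD, D − εS) also satisfies condition (G2): at almost every (S,D) ∈ ℝ^{d×d} × ℝ^{d×d}, Gε is differentiable and its partial derivatives satisfy (∂_S Gε(S,D)[X]):X ≥ 0 and (∂_D Gε(S,D)[X]):X ≤ 0 for every X, ((∂_S Gε(S,D) − ∂_D Gε(S,D))[X]):X > 0 for every X ≠ 0, and (∂_D Gε(S,D)[(∂_S Gε(S,D))*[X]]):X ≤ 0 for every X. -/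
noncomputable section
open MeasureTheory Filter Topology

/-- Auxiliary linear change of variables `(S, D) ↦ (S - εD, D - εS)`. -/
def epsEquiv (d : ℕ) (ε : ℝ) (hε : 1 - ε ^ 2 ≠ 0) :
    (Mat d × Mat d) ≃ₗ[ℝ] (Mat d × Mat d) where
  toFun p := (p.1 - ε • p.2, p.2 - ε • p.1)
  invFun p := ((1 - ε ^ 2)⁻¹ • (p.1 + ε • p.2), (1 - ε ^ 2)⁻¹ • (p.2 + ε • p.1))
  map_add' p q := by simp [Prod.ext_iff, smul_add]; constructor <;> abel
  map_smul' c p := by simp [Prod.ext_iff, smul_comm c]; constructor <;> module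
  left_inv p := by
    simp only [Prod.ext_iff, smul_sub, smul_smul]
    constructor <;> · match_scalars <;> field_simp <;> ring
  right_inv p := by
    simp only [Prod.ext_iff, smul_add, smul_smul]
    constructor <;> · match_scalars <;> field_simp <;> ring

/-- The pointwise property in condition (G2). -/
def G2prop {d : ℕ} (G : Mat d × Mat d → Mat d) (p : Mat d × Mat d) : Prop :=
  DifferentiableAt ℝ G p ∧
    (∀ X : Mat d, 0 ≤ frob (partialS G p X) X) ∧
    (∀ X : Mat d, frob (partialD G p X) X ≤ 0) ∧
    (∀ X : Mat d, X ≠ 0 → 0 < frob (partialS G p X - partialD G p X) X) ∧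
    (∀ X : Mat d,
      frob (partialD G p (ContinuousLinearMap.adjoint (partialS G p) X)) X ≤ 0)

lemma aux1 {d : ℕ} {A B : Mat d →L[ℝ] Mat d} {ε : ℝ} (hε0 : 0 < ε) {X : Mat d}
    (h1 : 0 ≤ frob (A X) X) (h2 : frob (B X) X ≤ 0) :
    0 ≤ frob ((A - ε • B) X) X := by
  simp only [frob, ContinuousLinearMap.sub_apply, ContinuousLinearMap.smul_apply,
    inner_sub_left, real_inner_smul_left] at *
  nlinarith

lemma aux2 {d : ℕ} {A B : Mat d →L[ℝ] Mat d} {ε : ℝ} (hε0 : 0 < ε) {X : Mat d}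
    (h1 : 0 ≤ frob (A X) X) (h2 : frob (B X) X ≤ 0) :
    frob ((B - ε • A) X) X ≤ 0 := by
  simp only [frob, ContinuousLinearMap.sub_apply, ContinuousLinearMap.smul_apply,
    inner_sub_left, real_inner_smul_left] at *
  nlinarith

lemma aux3 {d : ℕ} {A B : Mat d →L[ℝ] Mat d} {ε : ℝ} (hε0 : 0 < ε) {X : Mat d}
    (h3 : 0 < frob (A X - B X) X) :
    0 < frob ((A - ε • B) X - (B - ε • A) X) X := by
  simp only [frob, ContinuousLinearMap.sub_apply, ContinuousLinearMap.smul_apply,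
    inner_sub_left, real_inner_smul_left] at *
  nlinarith

lemma aux4 {d : ℕ} {A B : Mat d →L[ℝ] Mat d} {ε : ℝ} (hε0 : 0 < ε) {X : Mat d}
    (h4 : frob (B (ContinuousLinearMap.adjoint A X)) X ≤ 0) :
    frob ((B - ε • A) (ContinuousLinearMap.adjoint (A - ε • B) X)) X ≤ 0 := by
  have hadj : ContinuousLinearMap.adjoint (A - ε • B)
      = ContinuousLinearMap.adjoint A - ε • ContinuousLinearMap.adjoint B := by
    simp [map_sub, _root_.map_smul]
  rw [hadj]
  set u := ContinuousLinearMap.adjoint A X with hu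
  set v := ContinuousLinearMap.adjoint B X with hv
  have hBv : inner ℝ (B v) X = inner ℝ v v := by
    rw [ContinuousLinearMap.adjoint_inner_right]
  have hAu : inner ℝ (A u) X = inner ℝ u u := by
    rw [ContinuousLinearMap.adjoint_inner_right]
  have hAv : inner ℝ (A v) X = inner ℝ v u := by
    rw [ContinuousLinearMap.adjoint_inner_right]
  have hBu : inner ℝ (B u) X = inner ℝ u v := by
    rw [ContinuousLinearMap.adjoint_inner_right]
  have h4' : inner ℝ u v ≤ 0 := by rw [← hBu]; exact h4
  have huu : (0 : ℝ) ≤ inner ℝ u u := real_inner_self_nonneg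
  have hvv : (0 : ℝ) ≤ inner ℝ v v := real_inner_self_nonneg
  have hcm : inner ℝ v u = inner ℝ u v := real_inner_comm u v
  simp only [frob, ContinuousLinearMap.sub_apply, ContinuousLinearMap.smul_apply,
    map_sub, _root_.map_smul, inner_sub_left, real_inner_smul_left]
  rw [hBv, hAu, hAv, hBu, hcm]
  nlinarith [mul_nonneg hε0.le huu, mul_nonneg hε0.le hvv,
    mul_nonpos_of_nonneg_of_nonpos (mul_nonneg hε0.le hε0.le) h4']

/-- if `G` satisfies (G1) and (G2), then every `ε`-approximation `Gε`
also satisfies (G2). -/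
theorem Geps_condG2 {d : ℕ} (hd : 1 ≤ d)
    (G : Mat d × Mat d → Mat d)
    (hG1 : CondG1 G) (hG2 : CondG2 G)
    (ε : ℝ) (hε : ε ∈ Set.Ioo (0 : ℝ) 1) :
    CondG2 (Geps G ε) := by
  obtain ⟨hε0, hε1⟩ := hε
  have hsq : 1 - ε ^ 2 ≠ 0 := by nlinarith
  haveI : (volume : Measure (Mat d × Mat d)).IsAddHaarMeasure :=
    Measure.prod.instIsAddHaarMeasure volume volume
  set Lq : (Mat d × Mat d) ≃ₗ[ℝ] (Mat d × Mat d) := epsEquiv d ε hsq with hLq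
  let Lc : (Mat d × Mat d) ≃L[ℝ] (Mat d × Mat d) := Lq.toContinuousLinearEquiv
  have hLc : ∀ x : Mat d × Mat d, Lc x = (x.1 - ε • x.2, x.2 - ε • x.1) := fun _ => rfl
  have hcomp : Geps G ε = fun x => G (Lc x) := by
    funext x; rw [Geps, hLc]
  have hG2' : ∀ᵐ q ∂(volume : Measure (Mat d × Mat d)), G2prop G q := hG2
  have key : ∀ᵐ p ∂(volume : Measure (Mat d × Mat d)), G2prop G (Lc p) := by
    rw [ae_iff] at hG2' ⊢
    have hset : {p | ¬ G2prop G (Lc p)} = ⇑Lq ⁻¹' {q | ¬ G2prop G q} := rfl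
    rw [hset, Measure.addHaar_preimage_linearEquiv, hG2', mul_zero]
  have goal : ∀ᵐ p ∂(volume : Measure (Mat d × Mat d)), G2prop (Geps G ε) p := by
    filter_upwards [key] with p hp
    obtain ⟨hdq, h1, h2, h3, h4⟩ := hp
    have hdiff : DifferentiableAt ℝ (Geps G ε) p := by
      rw [hcomp]; exact hdq.comp p Lc.differentiableAt
    have hfd : fderiv ℝ (Geps G ε) p
        = (fderiv ℝ G (Lc p)).comp (Lc : (Mat d × Mat d) →L[ℝ] (Mat d × Mat d)) := by
      rw [hcomp]
      have h := fderiv_comp p hdq Lc.differentiableAt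
      rwa [Lc.fderiv] at h
    have hS : partialS (Geps G ε) p = partialS G (Lc p) - ε • partialD G (Lc p) := by
      ext X : 1
      simp only [partialS, partialD, hfd, ContinuousLinearMap.comp_apply,
        ContinuousLinearMap.sub_apply, ContinuousLinearMap.smul_apply,
        ContinuousLinearMap.inl_apply, ContinuousLinearMap.inr_apply,
        ContinuousLinearEquiv.coe_coe]
      rw [← _root_.map_smul, ← map_sub]
      congr 1
    have hD : partialD (Geps G ε) p = partialD G (Lc p) - ε • partialS G (Lc p) := by
      ext X : 1
      simp only [partialS, partialD, hfd, ContinuousLinearMap.comp_apply,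
        ContinuousLinearMap.sub_apply, ContinuousLinearMap.smul_apply,
        ContinuousLinearMap.inl_apply, ContinuousLinearMap.inr_apply,
        ContinuousLinearEquiv.coe_coe]
      rw [← _root_.map_smul, ← map_sub]
      congr 1
    refine ⟨hdiff, ?_, ?_, ?_, ?_⟩
    · intro X
      rw [hS]
      exact aux1 hε0 (h1 X) (h2 X)
    · intro X
      rw [hD]
      exact aux2 hε0 (h1 X) (h2 X)
    · intro X hX
      rw [hS, hD]
      exact aux3 hε0 (h3 X hX)
    · intro X
      rw [hS, hD]
      exact aux4 hε0 (h4 X)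
  exact goal
end
end

section
/- Let d ≥ 1 and ν > 0, τ* > 0, and define the Bingham response map f_B : ℝ^{d×d} → ℝ^{d×d} by f_B(S) := (1/(2ν))((|S| − τ*)⁺/|S|) S for S ≠ 0 and f_B(0) := 0 (so f_B(S) = 0 whenever |S| ≤ τ*). Then: (i) f_B is Lipschitz continuous; (ii) f_B is monotone, i.e. (f_B(S₁) − f_B(S₂)) : (S₁ − S₂) ≥ 0 for all S₁, S₂ ∈ ℝ^{d×d}; (iii) there exist constants C₁, C₂ > 0 such that for every S ∈ ℝ^{d×d}, S : f_B(S) ≥ C₁(|S|² + |f_B(S)|²) − C₂, i.e. the Bingham model satisfies the coercivity condition (G4) with exponent r = 2. -/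
noncomputable section
open scoped Classical

/-- The Bingham response map `D = f_B(S) = (1/(2ν)) ((|S|−τ*)⁺/|S|) S`, with `f_B(0)=0`. -/
def binghamMap {d : ℕ} (ν τstar : ℝ) (S : Mat d) : Mat d :=
  if S = 0 then 0 else ((1 / (2 * ν)) * (max (‖S‖ - τstar) 0 / ‖S‖)) • S

namespace BinghamAux

variable {d : ℕ}

/-- Projection onto the closed ball of radius `τ`. -/
noncomputable def ballProj (τ : ℝ) (S : Mat d) : Mat d :=
  if ‖S‖ ≤ τ then S else (τ / ‖S‖) • S

lemma norm_ballProj_le (τ : ℝ) (hτ : 0 ≤ τ) (S : Mat d) : ‖ballProj τ S‖ ≤ τ := by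
  unfold ballProj
  split_ifs with h
  · exact h
  · push_neg at h
    have h0 : 0 < ‖S‖ := lt_of_le_of_lt hτ h
    rw [norm_smul, Real.norm_eq_abs, abs_of_nonneg (div_nonneg hτ h0.le)]
    field_simp
    exact le_rfl

lemma ballProj_var (τ : ℝ) (hτ : 0 ≤ τ) (x z : Mat d) (hz : ‖z‖ ≤ τ) :
    (inner ℝ (x - ballProj τ x) (z - ballProj τ x) : ℝ) ≤ 0 := by
  unfold ballProj
  split_ifs with h
  · simp
  · push_neg at h
    have h0 : 0 < ‖x‖ := lt_of_le_of_lt hτ h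
    have hxz : (inner ℝ x z : ℝ) ≤ ‖x‖ * τ := by
      calc (inner ℝ x z : ℝ) ≤ ‖x‖ * ‖z‖ := real_inner_le_norm x z
        _ ≤ ‖x‖ * τ := by nlinarith
    have hxx : (inner ℝ x x : ℝ) = ‖x‖ ^ 2 := real_inner_self_eq_norm_sq x
    simp only [inner_sub_left, inner_sub_right, real_inner_smul_left,
      real_inner_smul_right, hxx]
    have hne : ‖x‖ ≠ 0 := h0.ne'
    have key : (1 - τ / ‖x‖) * ((inner ℝ x z : ℝ) - τ * ‖x‖) ≤ 0 := by
      apply mul_nonpos_of_nonneg_of_nonpos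
      · have : τ / ‖x‖ ≤ 1 := (div_le_one h0).mpr h.le
        linarith
      · nlinarith
    have expand : (inner ℝ x z : ℝ) - τ / ‖x‖ * ‖x‖ ^ 2 -
        (τ / ‖x‖ * inner ℝ x z - τ / ‖x‖ * (τ / ‖x‖ * ‖x‖ ^ 2)) =
        (1 - τ / ‖x‖) * ((inner ℝ x z : ℝ) - τ * ‖x‖) := by
      field_simp
    linarith [expand ▸ key]

lemma ballProj_firm (τ : ℝ) (hτ : 0 ≤ τ) (x y : Mat d) :
    ‖ballProj τ x - ballProj τ y‖ ^ 2 ≤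
      (inner ℝ (x - y) (ballProj τ x - ballProj τ y) : ℝ) := by
  set px := ballProj τ x
  set py := ballProj τ y
  have h1 : (inner ℝ (x - px) (py - px) : ℝ) ≤ 0 :=
    ballProj_var τ hτ x py (norm_ballProj_le τ hτ y)
  have h2 : (inner ℝ (y - py) (px - py) : ℝ) ≤ 0 :=
    ballProj_var τ hτ y px (norm_ballProj_le τ hτ x)
  have hid : (inner ℝ (x - y) (px - py) : ℝ) =
      (inner ℝ (px - py) (px - py) : ℝ) - (inner ℝ (x - px) (py - px) : ℝ)
        - (inner ℝ (y - py) (px - py) : ℝ) := by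
    simp only [inner_sub_left, inner_sub_right]
    ring
  have hnorm : (inner ℝ (px - py) (px - py) : ℝ) = ‖px - py‖ ^ 2 :=
    real_inner_self_eq_norm_sq _
  linarith [hid, hnorm]

lemma ballProj_lip (τ : ℝ) (hτ : 0 ≤ τ) (x y : Mat d) :
    ‖ballProj τ x - ballProj τ y‖ ≤ ‖x - y‖ := by
  have h := ballProj_firm τ hτ x y
  have hcs : (inner ℝ (x - y) (ballProj τ x - ballProj τ y) : ℝ) ≤
      ‖x - y‖ * ‖ballProj τ x - ballProj τ y‖ := real_inner_le_norm _ _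
  nlinarith [norm_nonneg (ballProj τ x - ballProj τ y), norm_nonneg (x - y)]

lemma bingham_eq (ν τ : ℝ) (hν : 0 < ν) (hτ : 0 < τ) (S : Mat d) :
    binghamMap ν τ S = (1 / (2 * ν)) • (S - ballProj τ S) := by
  by_cases h : S = 0
  · simp [h, binghamMap, ballProj, hτ.le]
  · have h0 : 0 < ‖S‖ := norm_pos_iff.mpr h
    rw [binghamMap, if_neg h, ballProj]
    by_cases hle : ‖S‖ ≤ τ
    · rw [if_pos hle]
      have : max (‖S‖ - τ) 0 = 0 := max_eq_right (by linarith)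
      simp [this]
    · rw [if_neg hle]
      push_neg at hle
      have hmax : max (‖S‖ - τ) 0 = ‖S‖ - τ := max_eq_left (by linarith)
      rw [hmax, smul_sub, smul_smul, ← sub_smul]
      congr 1
      field_simp

end BinghamAux

open BinghamAux in
/-- the Bingham response map is Lipschitz continuous, monotone, and
satisfies the coercivity condition (G4) with exponent `r = 2`. -/
theorem bingham_properties {d : ℕ} (hd : 1 ≤ d) (ν τstar : ℝ)
    (hν : 0 < ν) (hτ : 0 < τstar) :
    (∃ K : NNReal, LipschitzWith K (binghamMap (d := d) ν τstar)) ∧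
    (∀ S₁ S₂ : Mat d,
      0 ≤ frob (binghamMap ν τstar S₁ - binghamMap ν τstar S₂) (S₁ - S₂)) ∧
    (∃ C₁ C₂ : ℝ, 0 < C₁ ∧ 0 < C₂ ∧ ∀ S : Mat d,
      C₁ * (‖S‖ ^ 2 + ‖binghamMap ν τstar S‖ ^ 2) - C₂ ≤
        frob S (binghamMap ν τstar S)) := by
  set a : ℝ := 1 / (2 * ν) with ha
  have ha0 : 0 < a := by positivity
  have key : ∀ S : Mat d, binghamMap ν τstar S = a • (S - ballProj τstar S) :=
    fun S => bingham_eq ν τstar hν hτ S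
  -- 1-Lipschitz of id - proj
  have hcontr : ∀ x y : Mat d,
      ‖(x - ballProj τstar x) - (y - ballProj τstar y)‖ ≤ ‖x - y‖ := by
    intro x y
    set px := ballProj τstar x
    set py := ballProj τstar y
    have hfirm := ballProj_firm τstar hτ.le x y
    have hsq : ‖(x - px) - (y - py)‖ ^ 2 =
        ‖x - y‖ ^ 2 - 2 * (inner ℝ (x - y) (px - py) : ℝ) + ‖px - py‖ ^ 2 := by
      have : (x - px) - (y - py) = (x - y) - (px - py) := by abel
      rw [this, @norm_sub_sq_real]
    have : ‖(x - px) - (y - py)‖ ^ 2 ≤ ‖x - y‖ ^ 2 := by nlinarith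
    nlinarith [norm_nonneg ((x - px) - (y - py)), norm_nonneg (x - y)]
  refine ⟨⟨⟨a, ha0.le⟩, ?_⟩, ?_, ?_⟩
  · -- Lipschitz
    apply LipschitzWith.of_dist_le_mul
    intro x y
    rw [dist_eq_norm, dist_eq_norm, key x, key y, ← smul_sub, norm_smul,
      Real.norm_eq_abs, abs_of_pos ha0]
    exact mul_le_mul_of_nonneg_left (hcontr x y) ha0.le
  · -- monotone
    intro x y
    rw [key x, key y, frob, ← smul_sub, real_inner_smul_left]
    apply mul_nonneg ha0.le
    set px := ballProj τstar x
    set py := ballProj τstar y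
    have hid : ((x - px) - (y - py)) = (x - y) - (px - py) := by abel
    rw [hid, inner_sub_left]
    have hfirm := ballProj_firm τstar hτ.le x y
    have hcs : (inner ℝ (px - py) (x - y) : ℝ) ≤ ‖x - y‖ * ‖px - py‖ := by
      rw [real_inner_comm]; exact real_inner_le_norm _ _
    have hlip := ballProj_lip τstar hτ.le x y
    have hxx : (inner ℝ (x - y) (x - y) : ℝ) = ‖x - y‖ ^ 2 := real_inner_self_eq_norm_sq _
    nlinarith [norm_nonneg (px - py), norm_nonneg (x - y)]
  · -- coercivity
    refine ⟨a / (2 * (1 + a ^ 2)), a * τstar ^ 2, by positivity, by positivity, ?_⟩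
    intro S
    by_cases h : S = 0
    · simp [h, binghamMap, frob]
      have hp : 0 < a * τstar ^ 2 := by positivity
      nlinarith [hp, ha0, sq_nonneg τstar]
    · have h0 : 0 < ‖S‖ := norm_pos_iff.mpr h
      set t := ‖S‖
      set m := max (t - τstar) 0 with hm
      have hm0 : 0 ≤ m := le_max_right _ _
      have hmt : m ≤ t := by
        rcases max_cases (t - τstar) 0 with ⟨he, _⟩ | ⟨he, _⟩ <;> rw [hm, he] <;> linarith
      have hB : binghamMap ν τstar S = (a * (m / t)) • S := by
        rw [binghamMap, if_neg h]
      have hc0 : 0 ≤ a * (m / t) := by positivity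
      have hfrob : frob S (binghamMap ν τstar S) = a * m * t := by
        rw [hB, frob, real_inner_smul_right, real_inner_self_eq_norm_sq]
        field_simp
        ring
      have hnormf : ‖binghamMap ν τstar S‖ = a * m := by
        rw [hB, norm_smul, Real.norm_eq_abs, abs_of_nonneg hc0]
        field_simp
        rfl
      rw [hfrob, hnormf]
      have h1 : 1 + a ^ 2 > 0 := by positivity
      rw [div_mul_eq_mul_div, sub_le_iff_le_add, div_le_iff₀ (by positivity)]
      -- a * (t² + (am)²) ≤ (a m t + a τ²) * (2(1+a²))
      have key2 : t ^ 2 + a ^ 2 * m ^ 2 ≤ 2 * (1 + a ^ 2) * (m * t + τstar ^ 2) := by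
        rcases le_or_gt t τstar with hle | hlt
        · have hm' : m = 0 := max_eq_right (by linarith)
          rw [hm']
          nlinarith [sq_nonneg a, sq_nonneg t, sq_nonneg τstar, sq_nonneg (a * t),
            sq_nonneg (a * τstar)]
        · have hm' : m = t - τstar := max_eq_left (by linarith)
          rw [hm']
          nlinarith [sq_nonneg (t - τstar), sq_nonneg (a * t), sq_nonneg (a * τstar),
            sq_nonneg τstar]
      nlinarith [mul_le_mul_of_nonneg_left key2 ha0.le]
end
end

section
/- Let d ≥ 1 and ν > 0, δ* > 0, and define the activated Euler response map f_E : ℝ^{d×d} → ℝ^{d×d} by f_E(D) := 2ν((|D| − δ*)⁺/|D|) D for D ≠ 0 and f_E(0) := 0 (so f_E(D) = 0 whenever |D| ≤ δ*). Then: (i) f_E is Lipschitz continuous; (ii) f_E is monotone, i.e. (f_E(D₁) − f_E(D₂)) : (D₁ − D₂) ≥ 0 for all D₁, D₂ ∈ ℝ^{d×d}; (iii) there exist constants C₁, C₂ > 0 such that for every D ∈ ℝ^{d×d}, f_E(D) : D ≥ C₁(|f_E(D)|² + |D|²) − C₂, i.e. the activated Euler model satisfies the coercivity condition (G4) with exponent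 r = 2. -/
noncomputable section
open scoped Classical

/-- The activated Euler response map `S = f_E(D) = 2ν ((|D|−δ*)⁺/|D|) D`, with
`f_E(0)=0`. -/
def activatedEulerMap {d : ℕ} (ν δstar : ℝ) (D : Mat d) : Mat d :=
  if D = 0 then 0 else (2 * ν * (max (‖D‖ - δstar) 0 / ‖D‖)) • D

/-- The scalar coefficient in the activated Euler map. -/
def aemCoeff {d : ℕ} (ν δstar : ℝ) (D : Mat d) : ℝ :=
  2 * ν * (max (‖D‖ - δstar) 0 / ‖D‖)

lemma aem_eq_smul {d : ℕ} (ν δstar : ℝ) (D : Mat d) :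
    activatedEulerMap ν δstar D = (aemCoeff ν δstar D) • D := by
  unfold activatedEulerMap aemCoeff
  split_ifs with h
  · simp [h]
  · rfl

lemma aemCoeff_nonneg {d : ℕ} {ν : ℝ} (δstar : ℝ) (hν : 0 < ν) (D : Mat d) :
    0 ≤ aemCoeff ν δstar D := by
  unfold aemCoeff
  have : (0:ℝ) ≤ max (‖D‖ - δstar) 0 / ‖D‖ :=
    div_nonneg (le_max_right _ _) (norm_nonneg _)
  nlinarith

lemma aemCoeff_mul_norm {d : ℕ} {ν δstar : ℝ} (hδ : 0 < δstar) (D : Mat d) :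
    aemCoeff ν δstar D * ‖D‖ = 2 * ν * max (‖D‖ - δstar) 0 := by
  unfold aemCoeff
  rcases eq_or_ne ‖D‖ 0 with h | h
  · rw [h]
    have : max (0 - δstar) 0 = 0 := max_eq_right (by linarith)
    simp [this]
    exact Or.inr hδ.le
  · field_simp

lemma aemCoeff_le {d : ℕ} {ν δstar : ℝ} (hν : 0 < ν) (hδ : 0 < δstar) (D : Mat d) :
    aemCoeff ν δstar D ≤ 2 * ν := by
  unfold aemCoeff
  have h1 : max (‖D‖ - δstar) 0 ≤ ‖D‖ :=
    max_le (by linarith [norm_nonneg D]) (norm_nonneg D)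
  have h2 : max (‖D‖ - δstar) 0 / ‖D‖ ≤ 1 := div_le_one_of_le₀ h1 (norm_nonneg D)
  nlinarith

lemma aem_norm {d : ℕ} {ν δstar : ℝ} (hν : 0 < ν) (hδ : 0 < δstar) (D : Mat d) :
    ‖activatedEulerMap ν δstar D‖ = 2 * ν * max (‖D‖ - δstar) 0 := by
  rw [aem_eq_smul, norm_smul, Real.norm_eq_abs,
    abs_of_nonneg (aemCoeff_nonneg δstar hν D), aemCoeff_mul_norm hδ]

lemma aem_lipschitz {d : ℕ} {ν δstar : ℝ} (hν : 0 < ν) (hδ : 0 < δstar) :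
    ∃ K : NNReal, LipschitzWith K (activatedEulerMap (d := d) ν δstar) := by
  refine ⟨⟨2 * ν, by positivity⟩, LipschitzWith.of_dist_le_mul fun D₁ D₂ => ?_⟩
  set L := 2 * ν with hL
  set α₁ := aemCoeff ν δstar D₁ with hα₁
  set α₂ := aemCoeff ν δstar D₂ with hα₂
  set t₁ := ‖D₁‖ with ht₁
  set t₂ := ‖D₂‖ with ht₂
  set s₁ := L * max (t₁ - δstar) 0 with hs₁
  set s₂ := L * max (t₂ - δstar) 0 with hs₂
  have hα₁n : 0 ≤ α₁ := aemCoeff_nonneg δstar hν D₁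
  have hα₂n : 0 ≤ α₂ := aemCoeff_nonneg δstar hν D₂
  have hα₁m : α₁ * t₁ = s₁ := aemCoeff_mul_norm hδ D₁
  have hα₂m : α₂ * t₂ = s₂ := aemCoeff_mul_norm hδ D₂
  have hα₁L : α₁ ≤ L := aemCoeff_le hν hδ D₁
  have hα₂L : α₂ ≤ L := aemCoeff_le hν hδ D₂
  have hc : (inner ℝ D₁ D₂ : ℝ) ≤ t₁ * t₂ := real_inner_le_norm D₁ D₂
  set c := (inner ℝ D₁ D₂ : ℝ) with hcc
  have hdiff : (s₁ - s₂) ^ 2 ≤ L ^ 2 * (t₁ - t₂) ^ 2 := by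
    have h := abs_max_sub_max_le_abs (t₁ - δstar) (t₂ - δstar) 0
    have h' : |max (t₁ - δstar) 0 - max (t₂ - δstar) 0| ≤ |t₁ - t₂| := by
      rw [show t₁ - δstar - (t₂ - δstar) = t₁ - t₂ by ring] at h; exact h
    have hsq : (max (t₁ - δstar) 0 - max (t₂ - δstar) 0) ^ 2 ≤ (t₁ - t₂) ^ 2 := by
      rw [← sq_abs (max (t₁ - δstar) 0 - max (t₂ - δstar) 0), ← sq_abs (t₁ - t₂)]
      exact pow_le_pow_left₀ (abs_nonneg _) h' 2
    have : (s₁ - s₂) ^ 2 = L ^ 2 * (max (t₁ - δstar) 0 - max (t₂ - δstar) 0) ^ 2 := by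
      rw [hs₁, hs₂]; ring
    rw [this]
    have hL2 : (0:ℝ) ≤ L ^ 2 := sq_nonneg L
    exact mul_le_mul_of_nonneg_left hsq hL2
  have hexp : ‖activatedEulerMap ν δstar D₁ - activatedEulerMap ν δstar D₂‖ ^ 2
      = s₁ ^ 2 + s₂ ^ 2 - 2 * (α₁ * α₂) * c := by
    rw [aem_eq_smul, aem_eq_smul, @norm_sub_sq_real]
    rw [norm_smul, norm_smul, Real.norm_eq_abs, Real.norm_eq_abs,
      abs_of_nonneg hα₁n, abs_of_nonneg hα₂n,
      real_inner_smul_left, real_inner_smul_right]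
    rw [← ht₁, ← ht₂, ← hα₁, ← hα₂, ← hcc]
    have e1 : (α₁ * t₁) ^ 2 = s₁ ^ 2 := by rw [hα₁m]
    have e2 : (α₂ * t₂) ^ 2 = s₂ ^ 2 := by rw [hα₂m]
    rw [mul_pow, mul_pow, ← e1, ← e2]; ring
  have hkey : ‖activatedEulerMap ν δstar D₁ - activatedEulerMap ν δstar D₂‖ ^ 2
      ≤ L ^ 2 * ‖D₁ - D₂‖ ^ 2 := by
    rw [hexp, @norm_sub_sq_real, ← ht₁, ← ht₂, ← hcc]
    have hβL : α₁ * α₂ ≤ L ^ 2 := by nlinarith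
    have hβts : (α₁ * α₂) * (t₁ * t₂) = s₁ * s₂ := by
      rw [← hα₁m, ← hα₂m]; ring
    nlinarith [mul_nonneg (sub_nonneg.2 hβL) (sub_nonneg.2 hc)]
  rw [dist_eq_norm, dist_eq_norm]
  have hLn : (0:ℝ) ≤ L := by positivity
  have h1 : (0:ℝ) ≤ ‖activatedEulerMap ν δstar D₁ - activatedEulerMap ν δstar D₂‖ :=
    norm_nonneg _
  have h2 : (0:ℝ) ≤ L * ‖D₁ - D₂‖ := by positivity
  show ‖_‖ ≤ 2 * ν * ‖D₁ - D₂‖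
  rw [← hL]
  nlinarith [hkey, h1, h2]

lemma aem_monotone {d : ℕ} {ν δstar : ℝ} (hν : 0 < ν) (hδ : 0 < δstar)
    (D₁ D₂ : Mat d) :
    0 ≤ frob (activatedEulerMap ν δstar D₁ - activatedEulerMap ν δstar D₂)
      (D₁ - D₂) := by
  set α₁ := aemCoeff ν δstar D₁ with hα₁
  set α₂ := aemCoeff ν δstar D₂ with hα₂
  set t₁ := ‖D₁‖ with ht₁
  set t₂ := ‖D₂‖ with ht₂
  set s₁ := 2 * ν * max (t₁ - δstar) 0 with hs₁
  set s₂ := 2 * ν * max (t₂ - δstar) 0 with hs₂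
  have hα₁n : 0 ≤ α₁ := aemCoeff_nonneg δstar hν D₁
  have hα₂n : 0 ≤ α₂ := aemCoeff_nonneg δstar hν D₂
  have hα₁m : α₁ * t₁ = s₁ := aemCoeff_mul_norm hδ D₁
  have hα₂m : α₂ * t₂ = s₂ := aemCoeff_mul_norm hδ D₂
  have hc : (inner ℝ D₁ D₂ : ℝ) ≤ t₁ * t₂ := real_inner_le_norm D₁ D₂
  set c := (inner ℝ D₁ D₂ : ℝ) with hcc
  have hmono : 0 ≤ (s₁ - s₂) * (t₁ - t₂) := by
    rcases le_total t₁ t₂ with h | h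
    · have hm : max (t₁ - δstar) 0 ≤ max (t₂ - δstar) 0 :=
        max_le_max (by linarith) le_rfl
      have : s₁ ≤ s₂ := by rw [hs₁, hs₂]; nlinarith
      nlinarith [mul_nonneg (sub_nonneg.2 this) (sub_nonneg.2 h)]
    · have hm : max (t₂ - δstar) 0 ≤ max (t₁ - δstar) 0 :=
        max_le_max (by linarith) le_rfl
      have : s₂ ≤ s₁ := by rw [hs₁, hs₂]; nlinarith
      nlinarith [mul_nonneg (sub_nonneg.2 this) (sub_nonneg.2 h)]
  have hexp : frob (activatedEulerMap ν δstar D₁ - activatedEulerMap ν δstar D₂)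
      (D₁ - D₂) = α₁ * t₁ ^ 2 + α₂ * t₂ ^ 2 - (α₁ + α₂) * c := by
    unfold frob
    rw [aem_eq_smul, aem_eq_smul, inner_sub_left, inner_sub_right, inner_sub_right,
      real_inner_smul_left, real_inner_smul_left, real_inner_smul_left,
      real_inner_smul_left, real_inner_self_eq_norm_sq, real_inner_self_eq_norm_sq,
      real_inner_comm D₁ D₂]
    rw [← ht₁, ← ht₂, ← hα₁, ← hα₂, ← hcc]
    ring
  rw [hexp]
  have h1 : (α₁ + α₂) * c ≤ (α₁ + α₂) * (t₁ * t₂) :=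
    mul_le_mul_of_nonneg_left hc (by linarith)
  have e1 : α₁ * t₁ ^ 2 = s₁ * t₁ := by rw [sq, ← mul_assoc, hα₁m]
  have e2 : α₂ * t₂ ^ 2 = s₂ * t₂ := by rw [sq, ← mul_assoc, hα₂m]
  have e3 : (α₁ + α₂) * (t₁ * t₂) = s₁ * t₂ + s₂ * t₁ := by
    rw [add_mul, ← mul_assoc, ← mul_assoc, hα₁m]
    rw [show α₂ * t₁ * t₂ = α₂ * t₂ * t₁ by ring, hα₂m]
  nlinarith [hmono, h1]

lemma aem_coercive {d : ℕ} {ν δstar : ℝ} (hν : 0 < ν) (hδ : 0 < δstar) :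
    ∃ C₁ C₂ : ℝ, 0 < C₁ ∧ 0 < C₂ ∧ ∀ D : Mat d,
      C₁ * (‖activatedEulerMap ν δstar D‖ ^ 2 + ‖D‖ ^ 2) - C₂ ≤
        frob (activatedEulerMap ν δstar D) D := by
  refine ⟨min (1 / (4 * ν)) (ν / 2), ν * δstar ^ 2 / 2, ?_, by positivity, fun D => ?_⟩
  · exact lt_min (by positivity) (by positivity)
  set t := ‖D‖ with ht
  set m := max (t - δstar) 0 with hm
  have hmn : 0 ≤ m := le_max_right _ _
  have hmt : m ≤ t := max_le (by linarith [norm_nonneg D]) (norm_nonneg D)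
  have htn : 0 ≤ t := norm_nonneg D
  have hnorm : ‖activatedEulerMap ν δstar D‖ = 2 * ν * m := aem_norm hν hδ D
  have hfrob : frob (activatedEulerMap ν δstar D) D = 2 * ν * m * t := by
    unfold frob
    rw [aem_eq_smul, real_inner_smul_left, real_inner_self_eq_norm_sq, ← ht]
    rw [sq, ← mul_assoc, aemCoeff_mul_norm hδ, ← ht, ← hm]
  rw [hnorm, hfrob]
  have hmt2 : m * t ≥ t ^ 2 / 2 - δstar ^ 2 / 2 := by
    rcases le_total t δstar with h | h
    · have : m = 0 := max_eq_right (by linarith)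
      rw [this]; nlinarith
    · have : m = t - δstar := max_eq_left (by linarith)
      rw [this]; nlinarith [sq_nonneg (t - δstar)]
  have hC1a : min (1 / (4 * ν)) (ν / 2) ≤ 1 / (4 * ν) := min_le_left _ _
  have hC1b : min (1 / (4 * ν)) (ν / 2) ≤ ν / 2 := min_le_right _ _
  have hC1n : 0 < min (1 / (4 * ν)) (ν / 2) := lt_min (by positivity) (by positivity)
  have ha0 : (1 / (4 * ν)) * (2 * ν * m) ^ 2 = ν * m ^ 2 := by
    field_simp; ring
  have ha : min (1 / (4 * ν)) (ν / 2) * (2 * ν * m) ^ 2 ≤ ν * m ^ 2 := by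
    rw [← ha0]
    exact mul_le_mul_of_nonneg_right hC1a (sq_nonneg _)
  have hb : min (1 / (4 * ν)) (ν / 2) * t ^ 2 ≤ ν / 2 * t ^ 2 :=
    mul_le_mul_of_nonneg_right hC1b (sq_nonneg t)
  have hc1 : ν * m ^ 2 ≤ ν * (m * t) := by
    have : m ^ 2 ≤ m * t := by nlinarith [mul_nonneg hmn (sub_nonneg.2 hmt)]
    exact mul_le_mul_of_nonneg_left this hν.le
  have hd2 : ν / 2 * t ^ 2 ≤ ν * (m * t) + ν * δstar ^ 2 / 2 := by
    have := mul_le_mul_of_nonneg_left hmt2 hν.le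
    nlinarith
  nlinarith [ha, hb, hc1, hd2]

/-- the activated Euler response map is Lipschitz continuous, monotone,
and satisfies the coercivity condition (G4) with exponent `r = 2`. -/
theorem activatedEuler_properties {d : ℕ} (hd : 1 ≤ d) (ν δstar : ℝ)
    (hν : 0 < ν) (hδ : 0 < δstar) :
    (∃ K : NNReal, LipschitzWith K (activatedEulerMap (d := d) ν δstar)) ∧
    (∀ D₁ D₂ : Mat d,
      0 ≤ frob (activatedEulerMap ν δstar D₁ - activatedEulerMap ν δstar D₂)
        (D₁ - D₂)) ∧
    (∃ C₁ C₂ : ℝ, 0 < C₁ ∧ 0 < C₂ ∧ ∀ D : Mat d,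
      C₁ * (‖activatedEulerMap ν δstar D‖ ^ 2 + ‖D‖ ^ 2) - C₂ ≤
        frob (activatedEulerMap ν δstar D) D) := by
  exact ⟨aem_lipschitz hν hδ, fun D₁ D₂ => aem_monotone hν hδ D₁ D₂, aem_coercive hν hδ⟩
end
end
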